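/- Suppose s and λ satisfy the KKT system Hs - c'(x)ᵀλ = -∇f(x) and c'(x)s = -c(x), and suppose ρ > ‖λ‖_∞ and sᵀHs ≥ 0 with s ≠ 0 or c(x) ≠ 0. Then the directional derivative of the ℓ₁-merit function φ(·;ρ) at x in the direction s satisfies D(φ(x;ρ); s) ≤ -sᵀHs - (ρ - ‖λ‖_∞)‖c(x)‖₁ ≤ 0; in particular if sᵀHs > 0 or c(x) ≠ 0 then s is a descent direction for φ(·;ρ) at x. -/

import Mathlib

open Filter Matrix

lemma abs_right_deriv (h : ℝ → ℝ) (hd : HasDerivAt h (-(h 0)) 0) :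
    Tendsto (fun t => (|h t| - |h 0|)/t) (nhdsWithin 0 (Set.Ioi 0)) (nhds (-|h 0|)) := by
  have hslope : Tendsto (fun t => (h t - h 0)/t) (nhdsWithin 0 (Set.Ioi 0)) (nhds (-(h 0))) := by
    have := hasDerivAt_iff_tendsto_slope.mp hd
    refine (this.mono_left (nhdsWithin_mono _ ?_)).congr (fun t => by simp [slope_def_field, div_eq_inv_mul])
    intro t ht; exact ne_of_gt ht
  rcases lt_trichotomy (h 0) 0 with h0 | h0 | h0
  · have hev : ∀ᶠ t in nhdsWithin 0 (Set.Ioi 0), (|h t| - |h 0|)/t = -((h t - h 0)/t) := by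
      have hn : ∀ᶠ t in nhds (0:ℝ), h t < 0 := hd.continuousAt.eventually_lt_const h0
      filter_upwards [nhdsWithin_le_nhds hn] with t ht
      rw [abs_of_neg ht, abs_of_neg h0]; ring
    refine Tendsto.congr' (hev.mono fun t ht => ht.symm) ?_
    simpa [abs_of_neg h0] using hslope.neg
  · have hev : ∀ᶠ t in nhdsWithin 0 (Set.Ioi 0), (|h t| - |h 0|)/t = |(h t - h 0)/t| := by
      filter_upwards [self_mem_nhdsWithin] with t ht
      simp only [h0, sub_zero, abs_zero]
      rw [abs_div, abs_of_pos (show (0:ℝ) < t from ht)]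
    refine Tendsto.congr' (hev.mono fun t ht => ht.symm) ?_
    have := hslope.abs
    simpa [h0] using this
  · have hev : ∀ᶠ t in nhdsWithin 0 (Set.Ioi 0), (|h t| - |h 0|)/t = (h t - h 0)/t := by
      have hp : ∀ᶠ t in nhds (0:ℝ), 0 < h t := hd.continuousAt.eventually_const_lt h0
      filter_upwards [nhdsWithin_le_nhds hp] with t ht
      rw [abs_of_pos ht, abs_of_pos h0]
    refine Tendsto.congr' (hev.mono fun t ht => ht.symm) ?_
    simpa [abs_of_pos h0] using hslope


/-- under the KKT system, `ρ > ‖λ‖_∞`, and `sᵀHs ≥ 0`, the directional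
derivative of the ℓ₁-merit function satisfies
`D(φ(x;ρ);s) ≤ -sᵀHs - (ρ - ‖λ‖_∞)‖c(x)‖₁ ≤ 0`, and it is negative (descent direction)
if `sᵀHs > 0` or `c(x) ≠ 0`. -/
theorem kkt_descent_direction {n m : ℕ}
    (f : (Fin n → ℝ) → ℝ) (c : (Fin n → ℝ) → (Fin m → ℝ))
    (hf : ContDiff ℝ 1 f) (hc : ContDiff ℝ 1 c)
    (x s : Fin n → ℝ) (ρ : ℝ)
    (H : Matrix (Fin n) (Fin n) ℝ) (hH : H.IsSymm)
    (A : Matrix (Fin m) (Fin n) ℝ)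
    (g : Fin n → ℝ) (lam : Fin m → ℝ)
    (hg : ∀ v, fderiv ℝ f x v = g ⬝ᵥ v)
    (hA : ∀ v, fderiv ℝ c x v = A *ᵥ v)
    (hkkt1 : H *ᵥ s - Aᵀ *ᵥ lam = -g)
    (hkkt2 : A *ᵥ s = -(c x))
    (hρ : ‖lam‖ < ρ)
    (hpsd : 0 ≤ s ⬝ᵥ (H *ᵥ s))
    (hne : s ≠ 0 ∨ c x ≠ 0) :
    ∃ D : ℝ,
      Tendsto (fun t : ℝ =>
          ((f (x + t • s) + ρ * ∑ i, |c (x + t • s) i|)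
            - (f x + ρ * ∑ i, |c x i|)) / t)
        (nhdsWithin 0 (Set.Ioi 0)) (nhds D) ∧
      D ≤ -(s ⬝ᵥ (H *ᵥ s)) - (ρ - ‖lam‖) * ∑ i, |c x i| ∧
      D ≤ 0 ∧
      ((0 < s ⬝ᵥ (H *ᵥ s) ∨ c x ≠ 0) → D < 0) := by
  have hx0 : x + (0:ℝ) • s = x := by simp
  -- derivative of the line
  have hline : HasDerivAt (fun t : ℝ => x + t • s) s 0 := by
    simpa using ((hasDerivAt_id (0:ℝ)).smul_const s).const_add x
  -- derivative of f along the line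
  have hF : HasDerivAt (fun t : ℝ => f (x + t • s)) (g ⬝ᵥ s) 0 := by
    have hfd : HasFDerivAt f (fderiv ℝ f x) (x + (0:ℝ) • s) := by
      rw [hx0]; exact (hf.differentiable one_ne_zero x).hasFDerivAt
    have := hfd.comp_hasDerivAt 0 hline
    simpa [hg s, Function.comp_def] using this
  -- derivative of c along the line
  have hC : HasDerivAt (fun t : ℝ => c (x + t • s)) (A *ᵥ s) 0 := by
    have hcd : HasFDerivAt c (fderiv ℝ c x) (x + (0:ℝ) • s) := by
      rw [hx0]; exact (hc.differentiable one_ne_zero x).hasFDerivAt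
    have := hcd.comp_hasDerivAt 0 hline
    simpa [hA s, Function.comp_def] using this
  have hCi : ∀ i, HasDerivAt (fun t : ℝ => c (x + t • s) i) (-(c x i)) 0 := by
    intro i
    have := hasDerivAt_pi.mp hC i
    simpa [hkkt2] using this
  -- right derivative of each |c_i|
  have habs : ∀ i, Tendsto (fun t : ℝ => (|c (x + t • s) i| - |c x i|)/t)
      (nhdsWithin 0 (Set.Ioi 0)) (nhds (-|c x i|)) := by
    intro i
    have := abs_right_deriv (fun t : ℝ => c (x + t • s) i) (by simpa [hx0] using hCi i)
    simpa [hx0] using this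
  -- slope of f
  have hFs : Tendsto (fun t : ℝ => (f (x + t • s) - f x)/t)
      (nhdsWithin 0 (Set.Ioi 0)) (nhds (g ⬝ᵥ s)) := by
    have := hasDerivAt_iff_tendsto_slope.mp hF
    have h2 := this.mono_left (nhdsWithin_mono (0:ℝ) (fun t ht => ne_of_gt ht))
    refine h2.congr fun t => ?_
    simp [slope_def_field, div_eq_inv_mul, hx0]
  have hgs : g ⬝ᵥ s = -(lam ⬝ᵥ c x) - s ⬝ᵥ (H *ᵥ s) := by
    have hg' : g = Aᵀ *ᵥ lam - H *ᵥ s := by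
      funext i
      have := congrFun hkkt1 i
      simp only [Pi.sub_apply, Pi.neg_apply] at this ⊢
      linarith
    rw [hg', sub_dotProduct, mulVec_transpose, ← dotProduct_mulVec, hkkt2,
      dotProduct_neg, dotProduct_comm (H *ᵥ s) s]
  have hlc : |lam ⬝ᵥ c x| ≤ ‖lam‖ * ∑ i, |c x i| := by
    calc |lam ⬝ᵥ c x| = |∑ i, lam i * c x i| := rfl
      _ ≤ ∑ i, |lam i * c x i| := Finset.abs_sum_le_sum_abs _ _
      _ ≤ ∑ i, ‖lam‖ * |c x i| := by
          refine Finset.sum_le_sum fun i _ => ?_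
          rw [abs_mul]
          exact mul_le_mul_of_nonneg_right
            (by simpa [Real.norm_eq_abs] using norm_le_pi_norm lam i) (abs_nonneg _)
      _ = ‖lam‖ * ∑ i, |c x i| := by rw [Finset.mul_sum]
  have hSum : 0 ≤ ∑ i, |c x i| := Finset.sum_nonneg fun i _ => abs_nonneg _
  have hneg := neg_le_abs (lam ⬝ᵥ c x)
  have hD1 : g ⬝ᵥ s - ρ * ∑ i, |c x i|
      ≤ -(s ⬝ᵥ (H *ᵥ s)) - (ρ - ‖lam‖) * ∑ i, |c x i| := by
    rw [hgs]; nlinarith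
  refine ⟨g ⬝ᵥ s - ρ * ∑ i, |c x i|, ?_, hD1, ?_, ?_⟩
  · -- the limit
    have hsum : Tendsto (fun t : ℝ => ∑ i, (|c (x + t • s) i| - |c x i|)/t)
        (nhdsWithin 0 (Set.Ioi 0)) (nhds (∑ i, -|c x i|)) :=
      tendsto_finset_sum _ (fun i _ => habs i)
    have htot : Tendsto (fun t : ℝ => (f (x + t • s) - f x)/t
          + ρ * ∑ i, (|c (x + t • s) i| - |c x i|)/t)
        (nhdsWithin 0 (Set.Ioi 0)) (nhds (g ⬝ᵥ s + ρ * ∑ i, -|c x i|)) :=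
      hFs.add (hsum.const_mul ρ)
    have heq : ∀ᶠ t in nhdsWithin 0 (Set.Ioi 0),
        (f (x + t • s) - f x)/t + ρ * ∑ i, (|c (x + t • s) i| - |c x i|)/t
        = ((f (x + t • s) + ρ * ∑ i, |c (x + t • s) i|)
            - (f x + ρ * ∑ i, |c x i|)) / t := by
      filter_upwards [self_mem_nhdsWithin] with t ht
      have htne : (t:ℝ) ≠ 0 := ne_of_gt ht
      rw [← Finset.sum_div, Finset.sum_sub_distrib]
      field_simp
      ring
    have := htot.congr' heq
    simpa [Finset.sum_neg_distrib, mul_neg, ← sub_eq_add_neg] using this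
  · -- D ≤ 0
    nlinarith [hD1]
  · -- descent
    rintro (hpos | hcne)
    · nlinarith [hD1]
    · obtain ⟨i, hi⟩ := Function.ne_iff.mp hcne
      have hSpos : 0 < ∑ i, |c x i| :=
        Finset.sum_pos' (fun j _ => abs_nonneg _) ⟨i, Finset.mem_univ i, abs_pos.mpr hi⟩
      nlinarith [hD1]
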